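/- Let k be a field and let E be an associative unital k-algebra (not assumed finite-dimensional) which is finitely generated as a k-algebra. Let e_1, …, e_m be a complete system of orthogonal idempotents of E, i.e. e_i e_j = 0 for i ≠ j, e_i² = e_i, and e_1 + ⋯ + e_m = 1. If for every i the vector space e_i E e_i is finite-dimensional over k, then E is finite-dimensional over k. -/
import Mathlib

open Pointwise

section StmtAux

variable {k : Type*} [Field k] {E : Type*} [Ring E] [Algebra k E] {m : ℕ}

/-- A list `l` is a chain with vertex function `c` relative to a set `T`. -/
def SChain (e : Fin m → E) (T : Set E) (l : List E) (c : ℕ → Fin m) : Prop :=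
  ∀ (s : ℕ) (h : s < l.length), l[s] ∈ T ∧ e (c s) * l[s] * e (c (s + 1)) = l[s]

lemma mul_sandwich (e : Fin m → E) (hidem : ∀ i, e i * e i = e i)
    {i j r : Fin m} {x y : E} (hx : e i * x * e j = x) (hy : e j * y * e r = y) :
    e i * (x * y) * e r = x * y := by
  have h2 : ∀ (v : Fin m) (z : E), e v * (e v * z) = e v * z := fun v z => by
    rw [← mul_assoc, hidem]
  conv_lhs => rw [← hx, ← hy]
  conv_rhs => rw [← hx, ← hy]
  simp only [mul_assoc, h2, hidem]

lemma schain_sandwich (e : Fin m → E) (hidem : ∀ i, e i * e i = e i) (T : Set E) :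
    ∀ (l : List E) (c : ℕ → Fin m), SChain e T l c → l ≠ [] →
      e (c 0) * l.prod * e (c l.length) = l.prod := by
  intro l
  induction l with
  | nil => intro c _ h; exact absurd rfl h
  | cons a l IH =>
    intro c hc _
    by_cases hl : l = []
    · subst hl
      simpa using (hc 0 (by simp)).2
    · have htail : SChain e T l (fun r => c (r + 1)) := by
        intro s h
        have := hc (s + 1) (by simpa using Nat.succ_lt_succ h)
        simpa using this
      have hP := IH (fun r => c (r + 1)) htail hl
      have h0 := (hc 0 (by simp)).2
      simp only [List.prod_cons, List.length_cons]
      have h0' : e (c 0) * a * e (c 1) = a := by simpa using h0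
      have hP' : e (c 1) * l.prod * e (c (l.length + 1)) = l.prod := by simpa using hP
      exact mul_sandwich e hidem h0' hP'

lemma list_prod_mem_pow {E : Type*} [Ring E] [DecidableEq E] (U : Finset E)
    (h1 : (1 : E) ∈ U) :
    ∀ (q : ℕ) (l : List E), (∀ x ∈ l, x ∈ U) → l.length ≤ q → l.prod ∈ U ^ q := by
  intro q
  induction q with
  | zero =>
    intro l _ hlen
    have : l = [] := List.length_eq_zero_iff.mp (Nat.le_zero.mp hlen)
    subst this
    simp
  | succ q IH =>
    intro l hl hlen
    match l with
    | [] =>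
      have h1q : (1 : E) ∈ U ^ q := IH [] (by simp) (by simp)
      have := Finset.mul_mem_mul h1q h1
      rw [pow_succ]
      simpa using this
    | a :: l' =>
      rw [List.prod_cons, pow_succ']
      exact Finset.mul_mem_mul (hl a (by simp))
        (IH l' (fun x hx => hl x (by simp [hx])) (by simpa using hlen))

lemma key_lemma [DecidableEq E] (e : Fin m → E) (hidem : ∀ i, e i * e i = e i) (T : Set E) (U : Finset E) (hTU : T ⊆ ↑U) (h1U : (1 : E) ∈ U)
    (hB : ∀ (v : Fin m) (x : E), e v * x * e v = x →
      x ∈ Submodule.span k {b : E | b ∈ T ∧ e v * b * e v = b}) :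
    ∀ (l : List E) (c : ℕ → Fin m), SChain e T l c →
      l.prod ∈ Submodule.span k ((U ^ (2 * m) : Finset E) : Set E) := by
  suffices H : ∀ (n : ℕ) (l : List E) (c : ℕ → Fin m), l.length = n → SChain e T l c →
      l.prod ∈ Submodule.span k ((U ^ (2 * m) : Finset E) : Set E) from
    fun l c hc => H l.length l c rfl hc
  intro n
  induction n using Nat.strong_induction_on with
  | _ n IH =>
  intro l c hlen hc
  by_cases hsmall : l.length ≤ 2 * m
  · refine Submodule.subset_span (list_prod_mem_pow U h1U (2 * m) l ?_ hsmall)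
    intro x hx
    obtain ⟨s, h, rfl⟩ := List.mem_iff_getElem.mp hx
    exact hTU (hc s h).1
  · push_neg at hsmall
    obtain ⟨r1, r2, hne, heq⟩ := Fintype.exists_ne_map_eq_of_card_lt
      (fun r : Fin (m + 1) => c (2 * (r : ℕ))) (by simp)
    obtain ⟨s, t, hst, ht2m, hcc⟩ : ∃ s t : ℕ, s + 2 ≤ t ∧ t ≤ 2 * m ∧ c s = c t := by
      have h1 := r1.isLt
      have h2 := r2.isLt
      rcases hne.lt_or_gt with h | h
      · have h' : (r1 : ℕ) < (r2 : ℕ) := h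
        exact ⟨2 * r1, 2 * r2, by omega, by omega, heq⟩
      · have h' : (r2 : ℕ) < (r1 : ℕ) := h
        exact ⟨2 * r2, 2 * r1, by omega, by omega, heq.symm⟩
    have htl : t < l.length := by omega
    have hl1len : (l.take s).length = s := by simp; omega
    have hl2len : ((l.drop s).take (t - s)).length = t - s := by simp; omega
    have hl3len : (l.drop t).length = l.length - t := by simp
    have hsplit : l = l.take s ++ ((l.drop s).take (t - s) ++ l.drop t) := by
      have h3 : l.drop t = ((l.drop s)).drop (t - s) := by
        rw [List.drop_drop]
        congr 1
        omega
      rw [h3, List.take_append_drop, List.take_append_drop]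
    have hc2 : SChain e T ((l.drop s).take (t - s)) (fun r => c (s + r)) := by
      intro r h
      have hr : r < t - s := by rw [hl2len] at h; exact h
      have h' : s + r < l.length := by omega
      have horig := hc (s + r) h'
      have hget : ((l.drop s).take (t - s))[r] = l[s + r] := by
        simp [List.getElem_take, List.getElem_drop]
      constructor
      · rw [hget]; exact horig.1
      · show e (c (s + r)) * ((l.drop s).take (t - s))[r] * e (c (s + (r + 1)))
            = ((l.drop s).take (t - s))[r]
        rw [hget, show s + (r + 1) = s + r + 1 by omega]
        exact horig.2
    have hl2ne : (l.drop s).take (t - s) ≠ [] := by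
      intro h
      rw [h] at hl2len
      simp at hl2len
      omega
    have hmid : e (c s) * ((l.drop s).take (t - s)).prod * e (c s)
        = ((l.drop s).take (t - s)).prod := by
      have hs := schain_sandwich e hidem T ((l.drop s).take (t - s)) (fun r => c (s + r)) hc2 hl2ne
      have h1 : e (c s) * ((l.drop s).take (t - s)).prod
          * e (c (s + ((l.drop s).take (t - s)).length)) = ((l.drop s).take (t - s)).prod := by
        simpa using hs
      rw [hl2len, show s + (t - s) = t by omega, ← hcc] at h1
      exact h1
    have hPspan := hB (c s) ((l.drop s).take (t - s)).prod hmid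
    set φ : E →ₗ[k] E :=
      (LinearMap.mulLeft k (l.take s).prod).comp (LinearMap.mulRight k (l.drop t).prod)
      with hφdef
    have hφ : ∀ x : E, φ x = (l.take s).prod * (x * (l.drop t).prod) := fun x => rfl
    have himg : ∀ b ∈ {b : E | b ∈ T ∧ e (c s) * b * e (c s) = b},
        φ b ∈ Submodule.span k ((U ^ (2 * m) : Finset E) : Set E) := by
      rintro b ⟨hbT, hbv⟩
      have hlen' : (l.take s ++ b :: l.drop t).length = s + 1 + (l.length - t) := by
        simp [hl1len, hl3len]
        omega
      have hc' : SChain e T (l.take s ++ b :: l.drop t)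
          (fun r => if r ≤ s then c r else c (r + (t - s) - 1)) := by
        intro r h
        have hrlen : r < s + 1 + (l.length - t) := by rw [hlen'] at h; exact h
        rcases lt_trichotomy r s with hr | hr | hr
        · have hrl1 : r < (l.take s).length := by omega
          have hget : (l.take s ++ b :: l.drop t)[r] = l[r] := by
            rw [List.getElem_append_left hrl1]
            simp [List.getElem_take]
          have horig := hc r (by omega)
          refine ⟨by rw [hget]; exact horig.1, ?_⟩
          beta_reduce
          rw [hget, if_pos (by omega : r ≤ s), if_pos (by omega : r + 1 ≤ s)]
          exact horig.2
        · have hget : (l.take s ++ b :: l.drop t)[r] = b := by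
            rw [List.getElem_append_right (by omega : (l.take s).length ≤ r)]
            have h0 : r - (l.take s).length = 0 := by omega
            have h0' : r - s ⊓ l.length = 0 := by omega
            simp [h0, h0']
          refine ⟨by rw [hget]; exact hbT, ?_⟩
          beta_reduce
          rw [hget, if_pos (le_of_eq hr), if_neg (by omega : ¬ r + 1 ≤ s),
            show r + 1 + (t - s) - 1 = t by omega, ← hcc, hr]
          exact hbv
        · have hp : t + (r - s - 1) < l.length := by omega
          have hget : (l.take s ++ b :: l.drop t)[r] = l[t + (r - s - 1)] := by
            rw [List.getElem_append_right (by omega : (l.take s).length ≤ r)]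
            have : r - (l.take s).length = (r - s - 1) + 1 := by omega
            simp only [this, List.getElem_cons_succ]
            simp [List.getElem_drop]
          have horig := hc (t + (r - s - 1)) hp
          refine ⟨by rw [hget]; exact horig.1, ?_⟩
          beta_reduce
          rw [hget, if_neg (by omega : ¬ r ≤ s), if_neg (by omega : ¬ r + 1 ≤ s),
            show r + (t - s) - 1 = t + (r - s - 1) by omega,
            show r + 1 + (t - s) - 1 = t + (r - s - 1) + 1 by omega]
          exact horig.2
      have hprod : (l.take s ++ b :: l.drop t).prod
          = (l.take s).prod * (b * (l.drop t).prod) := by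
        rw [List.prod_append, List.prod_cons]
      have hIH := IH (l.take s ++ b :: l.drop t).length (by omega)
        (l.take s ++ b :: l.drop t) _ rfl hc'
      rw [hprod] at hIH
      rw [hφ]
      exact hIH
    have hle : Submodule.map φ
        (Submodule.span k {b : E | b ∈ T ∧ e (c s) * b * e (c s) = b})
        ≤ Submodule.span k ((U ^ (2 * m) : Finset E) : Set E) := by
      rw [Submodule.map_span]
      refine Submodule.span_le.mpr ?_
      rintro x ⟨b, hb, rfl⟩
      exact himg b hb
    have hmem : φ ((l.drop s).take (t - s)).prod
        ∈ Submodule.span k ((U ^ (2 * m) : Finset E) : Set E) :=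
      hle (Submodule.mem_map_of_mem hPspan)
    have hfinal : l.prod = φ ((l.drop s).take (t - s)).prod := by
      rw [hφ]
      conv_lhs => rw [hsplit]
      rw [List.prod_append, List.prod_append]
    rw [hfinal]
    exact hmem


end StmtAux


/--
STATEMENT 3: Let `k` be a field and let `E` be an associative unital `k`-algebra (not assumed
finite-dimensional) which is finitely generated as a `k`-algebra.  Let `e_1, …, e_m` be a
complete system of orthogonal idempotents of `E`.  If for every `i` the vector space
`e_i E e_i` is finite-dimensional over `k`, then `E` is finite-dimensional over `k`.

The subspace `e_i E e_i` is formalized as the range of the `k`-linear map `y ↦ e_i * y * e_i`.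
-/
theorem stmt_3 (k : Type*) [Field k] (E : Type*) [Ring E] [Algebra k E]
    (hfg : Algebra.FiniteType k E)
    (m : ℕ) (e : Fin m → E)
    (horth : ∀ i j, i ≠ j → e i * e j = 0)
    (hidem : ∀ i, e i * e i = e i)
    (hsum : ∑ i, e i = 1)
    (hfin : ∀ i, FiniteDimensional k
      (LinearMap.range ((LinearMap.mulRight k (e i)).comp (LinearMap.mulLeft k (e i))))) :
    FiniteDimensional k E := by
  classical
  rcases Nat.eq_zero_or_pos m with hm | hm
  · subst hm
    have h01 : (0 : E) = 1 := by simpa using hsum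
    have hsub : Subsingleton E := subsingleton_of_zero_eq_one h01
    refine Module.finite_def.mpr ⟨∅, ?_⟩
    rw [Finset.coe_empty, Submodule.span_empty]
    exact Submodule.eq_top_iff'.mpr fun x => by rw [Subsingleton.elim x 0]; exact Submodule.zero_mem _
  · obtain ⟨S, hS⟩ := hfg.out
    -- spanning sets of the corners
    have hBex : ∀ i : Fin m, ∃ B : Finset E, Submodule.span k (B : Set E)
        = LinearMap.range ((LinearMap.mulRight k (e i)).comp (LinearMap.mulLeft k (e i))) :=
      fun i => (Submodule.fg_iff_finiteDimensional _).mpr (hfin i)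
    choose B hBr using hBex
    have hrange : ∀ (i : Fin m) (x : E),
        x ∈ LinearMap.range ((LinearMap.mulRight k (e i)).comp (LinearMap.mulLeft k (e i)))
          ↔ e i * x * e i = x := by
      intro i x
      constructor
      · rintro ⟨y, rfl⟩
        show e i * (LinearMap.mulRight k (e i) (LinearMap.mulLeft k (e i) y)) * e i = _
        simp only [LinearMap.mulRight_apply, LinearMap.mulLeft_apply]
        have h : e i * (e i * y * e i) * e i = (e i * e i) * y * (e i * e i) := by
          noncomm_ring
        rw [h, hidem]
        rfl
      · intro hx
        exact ⟨x, by simpa using hx⟩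
    -- the finite set of "arrows and corner vectors"
    set T : Set E := (⋃ (i : Fin m) (j : Fin m),
        (fun y => e i * y * e j) '' (insert 1 (S : Set E))) ∪
        ⋃ (v : Fin m), (B v : Set E) with hT
    set U : Finset E := insert (1 : E)
      ((((Finset.univ : Finset (Fin m)) ×ˢ (Finset.univ : Finset (Fin m)) ×ˢ
          (insert (1 : E) S)).image (fun p => e p.1 * p.2.2 * e p.2.1)) ∪
        Finset.univ.biUnion B) with hU
    have hTU : T ⊆ ↑U := by
      intro x hx
      rw [hT] at hx
      rcases hx with hx | hx
      · simp only [Set.mem_iUnion, Set.mem_image] at hx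
        obtain ⟨i, j, y, hy, rfl⟩ := hx
        rw [hU]
        simp only [Finset.coe_insert, Set.mem_insert_iff, Finset.coe_union, Set.mem_union,
          Finset.coe_image, Set.mem_image, Finset.mem_coe]
        refine Or.inr (Or.inl ⟨(i, j, y), ?_, rfl⟩)
        simp only [Finset.mem_product, Finset.mem_univ, Finset.mem_insert, true_and]
        simpa using hy
      · simp only [Set.mem_iUnion, Finset.mem_coe] at hx
        obtain ⟨v, hv⟩ := hx
        rw [hU]
        simp only [Finset.coe_insert, Set.mem_insert_iff, Finset.coe_union, Set.mem_union,
          Finset.mem_coe, Finset.mem_biUnion]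
        exact Or.inr (Or.inr ⟨v, Finset.mem_univ v, hv⟩)
    have h1U : (1 : E) ∈ U := by rw [hU]; exact Finset.mem_insert_self _ _
    have hB : ∀ (v : Fin m) (x : E), e v * x * e v = x →
        x ∈ Submodule.span k {b : E | b ∈ T ∧ e v * b * e v = b} := by
      intro v x hx
      have hx' : x ∈ LinearMap.range ((LinearMap.mulRight k (e v)).comp
          (LinearMap.mulLeft k (e v))) := (hrange v x).mpr hx
      rw [← hBr v] at hx'
      refine Submodule.span_mono ?_ hx'
      intro b hb
      have hbr : b ∈ LinearMap.range ((LinearMap.mulRight k (e v)).comp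
          (LinearMap.mulLeft k (e v))) := by
        rw [← hBr v]
        exact Submodule.subset_span hb
      refine ⟨?_, (hrange v b).mp hbr⟩
      rw [hT]
      exact Or.inr (Set.mem_iUnion.mpr ⟨v, hb⟩)
    have keyW : ∀ (l : List E) (c : ℕ → Fin m), SChain e T l c →
        l.prod ∈ Submodule.span k ((U ^ (2 * m) : Finset E) : Set E) :=
      key_lemma e hidem T U hTU h1U hB
    -- chains from j to i
    set Chains : Fin m → Fin m → Set E := fun i j =>
      {x | ∃ (l : List E) (c : ℕ → Fin m), SChain e T l c ∧ l ≠ [] ∧ c 0 = i ∧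
        c l.length = j ∧ l.prod = x} with hChains
    have hChainsW : ∀ i j, Submodule.span k (Chains i j)
        ≤ Submodule.span k ((U ^ (2 * m) : Finset E) : Set E) := by
      intro i j
      refine Submodule.span_le.mpr ?_
      rintro x ⟨l, c, hc, -, -, -, rfl⟩
      exact keyW l c hc
    -- expansion of monomials in the generators
    have hexp : ∀ (l : List E), (∀ y ∈ l, y ∈ (S : Set E)) → ∀ i j : Fin m,
        e i * l.prod * e j ∈ Submodule.span k (Chains i j) := by
      intro l
      induction l with
      | nil =>
        intro _ i j
        apply Submodule.subset_span
        rw [hChains]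
        refine ⟨[e i * e j], fun r => if r = 0 then i else j, ?_, by simp, by simp, by simp, by simp⟩
        intro r hr
        have hr0 : r = 0 := by simpa using hr
        subst hr0
        constructor
        · show e i * e j ∈ T
          rw [hT]
          refine Or.inl (Set.mem_iUnion.mpr ⟨i, Set.mem_iUnion.mpr ⟨j, ⟨1, by simp, by simp⟩⟩⟩)
        · have h2 : ∀ (w : Fin m) (z : E), e w * (e w * z) = e w * z := fun w z => by
            rw [← mul_assoc, hidem]
          show e (if (0:ℕ) = 0 then i else j) * _ * e (if (1:ℕ) = 0 then i else j) = _
          simp [mul_assoc, h2, hidem]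
      | cons a l IHl =>
        intro hmem i j
        have h1 : e i * (a :: l).prod * e j
            = ∑ v : Fin m, (e i * a * e v) * (e v * l.prod * e j) := by
          rw [List.prod_cons]
          rw [show (a * l.prod : E) = ∑ v : Fin m, a * (e v * l.prod) from by
            rw [← Finset.mul_sum, ← Finset.sum_mul, hsum, one_mul]]
          rw [Finset.mul_sum, Finset.sum_mul]
          refine Finset.sum_congr rfl fun v _ => ?_
          have hv := hidem v
          conv_lhs => rw [← hv]
          noncomm_ring
        rw [h1]
        refine Submodule.sum_mem _ fun v _ => ?_
        have hy := IHl (fun y hy => hmem y (by simp [hy])) v j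
        have htT : (e i * a * e v) ∈ T := by
          rw [hT]
          exact Or.inl (Set.mem_iUnion.mpr ⟨i, Set.mem_iUnion.mpr ⟨v,
            ⟨a, Or.inr (hmem a (by simp)), rfl⟩⟩⟩)
        have hte : e i * (e i * a * e v) * e v = e i * a * e v := by
          have h : e i * (e i * a * e v) * e v = (e i * e i) * a * (e v * e v) := by
            noncomm_ring
          rw [h, hidem, hidem]
        have hmapped : ∀ x ∈ Chains v j, (e i * a * e v) * x ∈ Chains i j := by
          rintro x ⟨l', c', hc', hne, hc0, hcl, rfl⟩
          rw [hChains]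
          refine ⟨(e i * a * e v) :: l', fun r => if r = 0 then i else c' (r - 1),
            ?_, by simp, by simp, ?_, by rw [List.prod_cons]⟩
          · intro r hr
            match r with
            | 0 =>
              refine ⟨by simpa using htT, ?_⟩
              show e (if (0:ℕ) = 0 then i else _) * _ * e (if (1:ℕ) = 0 then i else c' 0) = _
              simp only [if_pos rfl, if_neg one_ne_zero, List.getElem_cons_zero, hc0]
              exact hte
            | (r' + 1) =>
              have hr' : r' < l'.length := by simpa using hr
              have horig := hc' r' hr'
              refine ⟨by simpa using horig.1, ?_⟩
              show e (if r' + 1 = 0 then i else c' (r' + 1 - 1)) * _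
                  * e (if r' + 2 = 0 then i else c' (r' + 2 - 1)) = _
              simp only [if_neg (Nat.succ_ne_zero r'), if_neg (Nat.succ_ne_zero (r'+1)),
                Nat.add_sub_cancel, List.getElem_cons_succ]
              simpa using horig.2
          · show (if ((e i * a * e v) :: l').length = 0 then i else
                c' (((e i * a * e v) :: l').length - 1)) = j
            simp only [List.length_cons, if_neg (Nat.succ_ne_zero _), Nat.add_sub_cancel]
            exact hcl
        have hmem2 : (e i * a * e v) * (e v * l.prod * e j)
            ∈ Submodule.span k (Chains i j) := by
          have h' := Submodule.map_span (LinearMap.mulLeft k (e i * a * e v)) (Chains v j)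
          have hin : LinearMap.mulLeft k (e i * a * e v) (e v * l.prod * e j)
              ∈ Submodule.map (LinearMap.mulLeft k (e i * a * e v))
                (Submodule.span k (Chains v j)) := Submodule.mem_map_of_mem hy
          rw [h'] at hin
          have hle : Submodule.span k (⇑(LinearMap.mulLeft k (e i * a * e v)) '' Chains v j)
              ≤ Submodule.span k (Chains i j) := by
            refine Submodule.span_mono ?_
            rintro y ⟨x, hx, rfl⟩
            exact hmapped x hx
          exact hle hin
        exact hmem2
    -- every element of E lies in the span
    have htop : ∀ x : E, x ∈ Submodule.span k ((U ^ (2 * m) : Finset E) : Set E) := by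
      intro x
      have hx : x ∈ Subalgebra.toSubmodule (Algebra.adjoin k (S : Set E)) := by
        rw [hS]
        simp
      rw [Algebra.adjoin_eq_span] at hx
      refine Submodule.span_le.mpr ?_ hx
      intro y hy
      obtain ⟨l, hlS, rfl⟩ := Submonoid.exists_list_of_mem_closure hy
      have hdecomp : l.prod = ∑ j : Fin m, ∑ i : Fin m, e i * l.prod * e j := by
        calc l.prod = (∑ i, e i) * l.prod * (∑ j, e j) := by rw [hsum, one_mul, mul_one]
        _ = ∑ j : Fin m, ∑ i : Fin m, e i * l.prod * e j := by
            rw [Finset.mul_sum]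
            simp only [Finset.sum_mul]
      rw [hdecomp]
      exact Submodule.sum_mem _ fun j _ => Submodule.sum_mem _ fun i _ =>
        hChainsW i j (hexp l hlS i j)
    exact Module.finite_def.mpr ⟨U ^ (2 * m), Submodule.eq_top_iff'.mpr htop⟩
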